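/- For the logarithmic mean θ(s,t) = ∫₀¹ s^{1-p} t^p dp, for all s,t,u,v > 0 one has u·∂₁θ(s,t) + v·∂₂θ(s,t) ≥ θ(u,v). -/

import Mathlib

open MeasureTheory intervalIntegral Metric

/-- The logarithmic mean `θ(s,t) = ∫₀¹ s^(1-p) t^p dp`. -/
noncomputable def logMean (s t : ℝ) : ℝ := ∫ p in (0:ℝ)..1, s ^ (1 - p) * t ^ p

/-- Partial derivative of the logarithmic mean in the first argument. -/
noncomputable def logMean₁ (s t : ℝ) : ℝ := deriv (fun u => logMean u t) s

/-- Partial derivative of the logarithmic mean in the second argument. -/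
noncomputable def logMean₂ (s t : ℝ) : ℝ := deriv (fun v => logMean s v) t

lemma cont_rpow {a : ℝ} (ha : 0 < a) : Continuous fun p : ℝ => a ^ p :=
  continuous_const.rpow continuous_id fun _ => Or.inl ha.ne'

lemma rpow_le_max {a p : ℝ} (ha : 0 < a) (hp0 : 0 ≤ p) (hp1 : p ≤ 1) : a ^ p ≤ max 1 a := by
  rcases le_total a 1 with h | h
  · exact le_max_of_le_left (Real.rpow_le_one ha.le h hp0)
  · calc a ^ p ≤ a ^ (1 : ℝ) := Real.rpow_le_rpow_of_exponent_le h hp1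
      _ = a := Real.rpow_one a
      _ ≤ max 1 a := le_max_right _ _

lemma logMean_symm (s t : ℝ) : logMean s t = logMean t s := by
  unfold logMean
  have h := intervalIntegral.integral_comp_sub_left (a := (0:ℝ)) (b := 1)
    (fun x => t ^ (1 - x) * s ^ x) 1
  simp only [sub_sub_cancel, sub_zero, sub_self] at h
  rw [← h]
  congr 1
  funext p
  rw [mul_comm]

lemma hasDerivAt_logMean_left {t s : ℝ} (ht : 0 < t) (hs : 0 < s) :
    HasDerivAt (fun u => logMean u t)
      (∫ p in (0:ℝ)..1, (1 - p) * s ^ (-p) * t ^ p) s := by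
  have hball : ∀ x ∈ ball s (s / 2), 0 < x := by
    intro x hx
    rw [mem_ball, Real.dist_eq, abs_lt] at hx
    linarith [hx.1]
  have hball' : ∀ x ∈ ball s (s / 2), s / 2 ≤ x := by
    intro x hx
    rw [mem_ball, Real.dist_eq, abs_lt] at hx
    linarith [hx.1]
  have key := intervalIntegral.hasDerivAt_integral_of_dominated_loc_of_deriv_le
    (F := fun u p => u ^ (1 - p) * t ^ p)
    (F' := fun u p => (1 - p) * u ^ (-p) * t ^ p)
    (bound := fun _ => max 1 (2 / s) * max 1 t)
    (a := 0) (b := 1) (μ := volume) (x₀ := s) (s := ball s (s / 2))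
    (ball_mem_nhds s (half_pos hs))
    ?_ ?_ ?_ ?_ ?_ ?_
  · exact key.2
  · filter_upwards [eventually_gt_nhds hs] with x hx
    exact (((cont_rpow hx).comp (continuous_const.sub continuous_id)).mul
      (cont_rpow ht)).aestronglyMeasurable
  · exact (((cont_rpow hs).comp (continuous_const.sub continuous_id)).mul
      (cont_rpow ht)).intervalIntegrable 0 1
  · exact (((continuous_const.sub continuous_id).mul
      ((cont_rpow hs).comp continuous_neg)).mul (cont_rpow ht)).aestronglyMeasurable
  · refine Filter.Eventually.of_forall fun p hp x hx => ?_
    rw [Set.uIoc_of_le zero_le_one] at hp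
    have hx0 : 0 < x := hball x hx
    have hxp : x ^ (-p) ≤ (2 / s) ^ p := by
      have h1 : x ^ (-p) ≤ (s / 2) ^ (-p) :=
        Real.rpow_le_rpow_of_nonpos (half_pos hs) (hball' x hx) (neg_nonpos.mpr hp.1.le)
      have h2 : (s / 2 : ℝ) ^ (-p) = (2 / s) ^ p := by
        rw [Real.rpow_neg (half_pos hs).le, ← Real.inv_rpow (half_pos hs).le, inv_div]
      linarith [h1, h2.le]
    rw [Real.norm_eq_abs, abs_mul, abs_mul]
    have hp1 : |1 - p| ≤ 1 := by rw [abs_le]; constructor <;> linarith [hp.1, hp.2]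
    have hxa : |x ^ (-p)| = x ^ (-p) := abs_of_nonneg (Real.rpow_nonneg hx0.le _)
    have hta : |t ^ p| = t ^ p := abs_of_nonneg (Real.rpow_nonneg ht.le _)
    rw [hxa, hta]
    have h2s : (0:ℝ) < 2 / s := by positivity
    calc |1 - p| * x ^ (-p) * t ^ p
        ≤ 1 * (2 / s) ^ p * t ^ p := by
          apply mul_le_mul _ le_rfl (Real.rpow_nonneg ht.le _) (by positivity)
          exact mul_le_mul hp1 hxp (Real.rpow_nonneg hx0.le _) zero_le_one
      _ ≤ max 1 (2 / s) * max 1 t := by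
          rw [one_mul]
          exact mul_le_mul (rpow_le_max h2s hp.1.le hp.2) (rpow_le_max ht hp.1.le hp.2)
            (Real.rpow_nonneg ht.le _) (le_max_of_le_left zero_le_one)
  · exact intervalIntegrable_const
  · refine Filter.Eventually.of_forall fun p hp x hx => ?_
    have hx0 : 0 < x := hball x hx
    have h := (Real.hasDerivAt_rpow_const (p := 1 - p) (Or.inl hx0.ne')).mul_const (t ^ p)
    have he : (1 : ℝ) - p - 1 = -p := by ring
    rwa [he] at h

lemma logMean₁_eq {s t : ℝ} (hs : 0 < s) (ht : 0 < t) :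
    logMean₁ s t = ∫ p in (0:ℝ)..1, (1 - p) * s ^ (-p) * t ^ p :=
  (hasDerivAt_logMean_left ht hs).deriv

lemma logMean₂_eq {s t : ℝ} (hs : 0 < s) (ht : 0 < t) :
    logMean₂ s t = ∫ p in (0:ℝ)..1, p * s ^ (1 - p) * t ^ (p - 1) := by
  have h1 : logMean₂ s t = ∫ p in (0:ℝ)..1, (1 - p) * t ^ (-p) * s ^ p := by
    have : (fun v => logMean s v) = fun v => logMean v s := by
      funext v; exact logMean_symm s v
    rw [logMean₂, this]
    exact (hasDerivAt_logMean_left hs ht).deriv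
  rw [h1]
  have h := intervalIntegral.integral_comp_sub_left (a := (0:ℝ)) (b := 1)
    (fun x => (1 - x) * t ^ (-x) * s ^ x) 1
  simp only [sub_sub_cancel, sub_zero, sub_self, neg_sub] at h
  rw [← h]
  congr 1
  funext p
  rw [mul_assoc, mul_assoc, mul_comm (t ^ (p - 1))]

theorem logMean_four_point (s t u v : ℝ) (hs : 0 < s) (ht : 0 < t) (hu : 0 < u) (hv : 0 < v) :
    u * logMean₁ s t + v * logMean₂ s t ≥ logMean u v := by
  rw [logMean₁_eq hs ht, logMean₂_eq hs ht, ← intervalIntegral.integral_const_mul,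
    ← intervalIntegral.integral_const_mul, ← intervalIntegral.integral_add]
  · rw [ge_iff_le, logMean]
    apply intervalIntegral.integral_mono_on zero_le_one
    · exact (((cont_rpow hu).comp (continuous_const.sub continuous_id)).mul
        (cont_rpow hv)).intervalIntegrable 0 1
    · apply Continuous.intervalIntegrable
      apply Continuous.add
      · exact continuous_const.mul (((continuous_const.sub continuous_id).mul
          ((cont_rpow hs).comp continuous_neg)).mul (cont_rpow ht))
      · exact continuous_const.mul ((continuous_id.mul
          ((cont_rpow hs).comp (continuous_const.sub continuous_id))).mul
          ((cont_rpow ht).comp (continuous_id.sub continuous_const)))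
    · intro p hp
      obtain ⟨hp0, hp1⟩ := hp
      set a := u * s ^ (-p) * t ^ p with ha_def
      set b := v * s ^ (1 - p) * t ^ (p - 1) with hb_def
      have ha : 0 < a := by positivity
      have hb : 0 < b := by positivity
      have hgm := Real.geom_mean_le_arith_mean2_weighted (w₁ := 1 - p) (w₂ := p)
        (p₁ := a) (p₂ := b) (by linarith) hp0 ha.le hb.le (by ring)
      have hkey : a ^ (1 - p) * b ^ p = u ^ (1 - p) * v ^ p := by
        have la : Real.log a = Real.log u + (-p) * Real.log s + p * Real.log t := by
          rw [ha_def, Real.log_mul (by positivity) (by positivity),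
            Real.log_mul (by positivity) (by positivity), Real.log_rpow hs,
            Real.log_rpow ht]
        have lb : Real.log b = Real.log v + (1 - p) * Real.log s + (p - 1) * Real.log t := by
          rw [hb_def, Real.log_mul (by positivity) (by positivity),
            Real.log_mul (by positivity) (by positivity), Real.log_rpow hs,
            Real.log_rpow ht]
        calc a ^ (1 - p) * b ^ p
            = Real.exp (Real.log a * (1 - p) + Real.log b * p) := by
              rw [Real.rpow_def_of_pos ha, Real.rpow_def_of_pos hb, ← Real.exp_add]
          _ = Real.exp (Real.log u * (1 - p) + Real.log v * p) := by
              rw [la, lb]; ring_nf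
          _ = u ^ (1 - p) * v ^ p := by
              rw [Real.exp_add, ← Real.rpow_def_of_pos hu, ← Real.rpow_def_of_pos hv]
      calc u ^ (1 - p) * v ^ p = a ^ (1 - p) * b ^ p := hkey.symm
        _ ≤ (1 - p) * a + p * b := hgm
        _ = u * ((1 - p) * s ^ (-p) * t ^ p) + v * (p * s ^ (1 - p) * t ^ (p - 1)) := by
            rw [ha_def, hb_def]; ring
  · exact (continuous_const.mul (((continuous_const.sub continuous_id).mul
      ((cont_rpow hs).comp continuous_neg)).mul (cont_rpow ht))).intervalIntegrable 0 1
  · exact (continuous_const.mul ((continuous_id.mul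
      ((cont_rpow hs).comp (continuous_const.sub continuous_id))).mul
      ((cont_rpow ht).comp (continuous_id.sub continuous_const)))).intervalIntegrable 0 1
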